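/- For every bipartite graph G without isolated vertices there exists a bipartite graph G' without isolated vertices with ν(G') = ν(G) + 4 vertices and ι_m(G') = 2·ι_m(G) + 1 maximal independent sets. -/

import Mathlib

/-- `s` is an independent set of vertices in `G`. -/
def IsIndep {V : Type*} (G : SimpleGraph V) (s : Finset V) : Prop :=
  ∀ u ∈ s, ∀ v ∈ s, ¬ G.Adj u v

/-- `s` is a maximal independent set in `G`. -/
def IsMaxIndep {V : Type*} (G : SimpleGraph V) (s : Finset V) : Prop :=
  IsIndep G s ∧ ∀ t : Finset V, IsIndep G t → s ⊆ t → s = t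

/-- `ι G`: the number of independent sets of `G` (including `∅`). -/
noncomputable def iota {V : Type*} [Fintype V] (G : SimpleGraph V) : ℕ :=
  Nat.card {s : Finset V // IsIndep G s}

/-- `ι_m G`: the number of maximal independent sets of `G`. -/
noncomputable def iotaM {V : Type*} [Fintype V] (G : SimpleGraph V) : ℕ :=
  Nat.card {s : Finset V // IsMaxIndep G s}

/-- `(L, R)` is a bipartition of `G`. -/
def IsBipartition {V : Type*} (G : SimpleGraph V) (L R : Finset V) : Prop :=
  Disjoint L R ∧ (∀ v : V, v ∈ L ∨ v ∈ R) ∧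
    ∀ u v : V, G.Adj u v → (u ∈ L ∧ v ∈ R) ∨ (u ∈ R ∧ v ∈ L)

/-- `G` is bipartite. -/
def IsBipartite {V : Type*} (G : SimpleGraph V) : Prop :=
  ∃ L R : Finset V, IsBipartition G L R

/-- `G` has no isolated vertices. -/
def NoIsolated {V : Type*} (G : SimpleGraph V) : Prop :=
  ∀ v : V, ∃ u : V, G.Adj v u

open Sum Finset

/-! ### Basic reformulation of maximality -/

lemma maxIndep_iff {V : Type*} (G : SimpleGraph V) (s : Finset V) :
    IsMaxIndep G s ↔ IsIndep G s ∧ ∀ v ∉ s, ∃ u ∈ s, G.Adj u v := by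
  classical
  constructor
  · rintro ⟨hi, hmax⟩
    refine ⟨hi, fun v hv => ?_⟩
    by_contra h
    push_neg at h
    have hins : IsIndep G (insert v s) := by
      intro a ha b hb hadj
      rw [Finset.mem_insert] at ha hb
      obtain ha | ha := ha <;> obtain hb | hb := hb
      · rw [ha, hb] at hadj; exact G.loopless.irrefl v hadj
      · rw [ha] at hadj; exact h b hb hadj.symm
      · rw [hb] at hadj; exact h a ha hadj
      · exact hi a ha b hb hadj
    have := hmax _ hins (Finset.subset_insert _ _)
    exact hv (this ▸ Finset.mem_insert_self v s)
  · rintro ⟨hi, hd⟩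
    refine ⟨hi, fun t ht hst => ?_⟩
    refine Finset.Subset.antisymm hst (fun v hv => ?_)
    by_contra hvs
    obtain ⟨u, hu, hadj⟩ := hd v hvs
    exact ht u (hst hu) v hv hadj

/-! ### Relabelling along an equivalence -/

def relabel {A B : Type*} (e : A ≃ B) (G : SimpleGraph A) : SimpleGraph B where
  Adj a b := G.Adj (e.symm a) (e.symm b)
  symm := ⟨fun a b h => G.symm.symm _ _ h⟩
  loopless := ⟨fun a h => G.loopless.irrefl _ h⟩

@[simp] lemma relabel_adj {A B : Type*} (e : A ≃ B) (G : SimpleGraph A) (a b : B) :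
    (relabel e G).Adj a b ↔ G.Adj (e.symm a) (e.symm b) := Iff.rfl

lemma relabel_relabel {A B : Type*} (e : A ≃ B) (G : SimpleGraph A) :
    relabel e.symm (relabel e G) = G := by
  ext a b; simp

lemma relabel_indep {A B : Type*} (e : A ≃ B) (G : SimpleGraph A) (t : Finset A)
    (ht : IsIndep G t) : IsIndep (relabel e G) (t.map e.toEmbedding) := by
  intro a ha b hb hadj
  rw [Finset.mem_map_equiv] at ha hb
  exact ht _ ha _ hb hadj

lemma relabel_maxIndep {A B : Type*} (e : A ≃ B) (G : SimpleGraph A) (t : Finset A)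
    (ht : IsMaxIndep G t) : IsMaxIndep (relabel e G) (t.map e.toEmbedding) := by
  rw [maxIndep_iff] at ht ⊢
  refine ⟨relabel_indep e G t ht.1, fun v hv => ?_⟩
  rw [Finset.mem_map_equiv] at hv
  obtain ⟨u, hu, hadj⟩ := ht.2 _ hv
  refine ⟨e u, Finset.mem_map_equiv.mpr (by simpa using hu), ?_⟩
  simpa using hadj

lemma relabel_iotaM {A B : Type*} [Fintype A] [Fintype B] (e : A ≃ B) (G : SimpleGraph A) :
    iotaM (relabel e G) = iotaM G := by
  have E : {t : Finset A // IsMaxIndep G t} ≃ {s : Finset B // IsMaxIndep (relabel e G) s} :=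
    { toFun := fun t => ⟨t.1.map e.toEmbedding, relabel_maxIndep e G t.1 t.2⟩
      invFun := fun s => ⟨s.1.map e.symm.toEmbedding, by
        have := relabel_maxIndep e.symm (relabel e G) s.1 s.2
        rwa [relabel_relabel] at this⟩
      left_inv := by
        rintro ⟨t, ht⟩
        apply Subtype.ext
        ext a
        simp [Finset.mem_map_equiv]
      right_inv := by
        rintro ⟨s, hs⟩
        apply Subtype.ext
        ext a
        simp [Finset.mem_map_equiv] }
  exact (Nat.card_congr E).symm

lemma relabel_bipartite {A B : Type*} (e : A ≃ B) (G : SimpleGraph A)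
    (h : IsBipartite G) : IsBipartite (relabel e G) := by
  obtain ⟨L, R, hd, hc, hadj⟩ := h
  refine ⟨L.map e.toEmbedding, R.map e.toEmbedding, ?_, fun v => ?_, fun u v huv => ?_⟩
  · rw [Finset.disjoint_left] at hd ⊢
    intro a ha hb
    rw [Finset.mem_map_equiv] at ha hb
    exact hd ha hb
  · rcases hc (e.symm v) with h | h
    · exact Or.inl (Finset.mem_map_equiv.mpr h)
    · exact Or.inr (Finset.mem_map_equiv.mpr h)
  · rcases hadj _ _ huv with ⟨h1, h2⟩ | ⟨h1, h2⟩
    · exact Or.inl ⟨Finset.mem_map_equiv.mpr h1, Finset.mem_map_equiv.mpr h2⟩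
    · exact Or.inr ⟨Finset.mem_map_equiv.mpr h1, Finset.mem_map_equiv.mpr h2⟩

lemma relabel_noIsolated {A B : Type*} (e : A ≃ B) (G : SimpleGraph A)
    (h : NoIsolated G) : NoIsolated (relabel e G) := by
  intro v
  obtain ⟨u, hu⟩ := h (e.symm v)
  exact ⟨e u, by simpa using hu⟩

/-! ### The construction: attach a `P₄` -/

section Ext
variable {V : Type*} [DecidableEq V]

def extG (G : SimpleGraph V) (L : Finset V) : SimpleGraph (V ⊕ Fin 4) :=
  SimpleGraph.fromRel (fun a b => match a, b with
    | inl u, inl v => G.Adj u v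
    | inl u, inr i => u ∈ L ∧ i = 1
    | inr i, inr j => (i = 0 ∧ j = 1) ∨ (i = 1 ∧ j = 2) ∨ (i = 2 ∧ j = 3)
    | inr _, inl _ => False)

variable (G : SimpleGraph V) (L : Finset V)

@[simp] lemma extG_adj_inl_inl (u v : V) :
    (extG G L).Adj (inl u) (inl v) ↔ G.Adj u v := by
  simp only [extG, SimpleGraph.fromRel_adj]
  constructor
  · rintro ⟨-, h | h⟩
    · exact h
    · exact h.symm
  · exact fun h => ⟨by simp [G.ne_of_adj h], Or.inl h⟩

@[simp] lemma extG_adj_inl_inr (u : V) (i : Fin 4) :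
    (extG G L).Adj (inl u) (inr i) ↔ u ∈ L ∧ i = 1 := by
  simp only [extG, SimpleGraph.fromRel_adj]
  constructor
  · rintro ⟨-, h | h⟩
    · exact h
    · exact h.elim
  · exact fun h => ⟨by simp, Or.inl h⟩

@[simp] lemma extG_adj_inr_inl (i : Fin 4) (u : V) :
    (extG G L).Adj (inr i) (inl u) ↔ u ∈ L ∧ i = 1 := by
  rw [SimpleGraph.adj_comm]; exact extG_adj_inl_inr G L u i

@[simp] lemma extG_adj_inr_inr (i j : Fin 4) :
    (extG G L).Adj (inr i) (inr j) ↔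
      (i = 0 ∧ j = 1) ∨ (i = 1 ∧ j = 2) ∨ (i = 2 ∧ j = 3) ∨
      (j = 0 ∧ i = 1) ∨ (j = 1 ∧ i = 2) ∨ (j = 2 ∧ i = 3) := by
  simp only [extG, SimpleGraph.fromRel_adj]
  constructor
  · rintro ⟨-, h | h⟩ <;> fin_cases i <;> fin_cases j <;> simp_all
  · intro h; fin_cases i <;> fin_cases j <;> simp_all

end Ext

section Main
variable {V : Type*} [Fintype V] [DecidableEq V]

def liftF (t : Finset V) : Finset (V ⊕ Fin 4) := t.map ⟨inl, Sum.inl_injective⟩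

@[simp] lemma mem_liftF_inl (t : Finset V) (u : V) : inl u ∈ liftF t ↔ u ∈ t := by
  simp [liftF]

@[simp] lemma mem_liftF_inr (t : Finset V) (i : Fin 4) : inr i ∉ liftF t := by
  simp [liftF]

def S1 (t : Finset V) : Finset (V ⊕ Fin 4) := liftF t ∪ {inr 0, inr 2}
def S2 (t : Finset V) : Finset (V ⊕ Fin 4) := liftF t ∪ {inr 0, inr 3}
def S0 (R : Finset V) : Finset (V ⊕ Fin 4) := liftF R ∪ {inr 1, inr 3}

variable (G : SimpleGraph V) (L R : Finset V)

lemma S1_maxIndep (hLR : IsBipartition G L R) (t : Finset V) (ht : IsMaxIndep G t) :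
    IsMaxIndep (extG G L) (S1 t) := by
  rw [maxIndep_iff] at ht ⊢
  constructor
  · rintro (a | i) ha (b | j) hb hadj
    · simp only [S1, Finset.mem_union, mem_liftF_inl] at ha hb
      simp only [Finset.mem_insert, Finset.mem_singleton, reduceCtorEq, or_self, or_false]
        at ha hb
      exact ht.1 a ha b hb ((extG_adj_inl_inl G L a b).mp hadj)
    · simp only [S1, Finset.mem_union, mem_liftF_inr, false_or, Finset.mem_insert,
        Finset.mem_singleton, inr.injEq] at hb
      rw [extG_adj_inl_inr] at hadj
      rcases hb with rfl | rfl <;> simp_all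
    · simp only [S1, Finset.mem_union, mem_liftF_inr, false_or, Finset.mem_insert,
        Finset.mem_singleton, inr.injEq] at ha
      rw [extG_adj_inr_inl] at hadj
      rcases ha with rfl | rfl <;> simp_all
    · simp only [S1, Finset.mem_union, mem_liftF_inr, false_or, Finset.mem_insert,
        Finset.mem_singleton, inr.injEq] at ha hb
      rw [extG_adj_inr_inr] at hadj
      rcases ha with rfl | rfl <;> rcases hb with rfl | rfl <;> simp_all
  · rintro (w | i) hw
    · simp only [S1, Finset.mem_union, mem_liftF_inl, Finset.mem_insert,
        Finset.mem_singleton, reduceCtorEq, or_self, or_false] at hw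
      obtain ⟨u, hu, hadj⟩ := ht.2 w hw
      exact ⟨inl u, by simp [S1, hu], by simpa using hadj⟩
    · fin_cases i
      · exact absurd (by simp [S1]) hw
      · exact ⟨inr 0, by simp [S1], by simp⟩
      · exact absurd (by simp [S1]) hw
      · exact ⟨inr 2, by simp [S1], by simp⟩

lemma S2_maxIndep (hLR : IsBipartition G L R) (t : Finset V) (ht : IsMaxIndep G t) :
    IsMaxIndep (extG G L) (S2 t) := by
  rw [maxIndep_iff] at ht ⊢
  constructor
  · rintro (a | i) ha (b | j) hb hadj
    · simp only [S2, Finset.mem_union, mem_liftF_inl, Finset.mem_insert,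
        Finset.mem_singleton, reduceCtorEq, or_self, or_false] at ha hb
      exact ht.1 a ha b hb ((extG_adj_inl_inl G L a b).mp hadj)
    · simp only [S2, Finset.mem_union, mem_liftF_inr, false_or, Finset.mem_insert,
        Finset.mem_singleton, inr.injEq] at hb
      rw [extG_adj_inl_inr] at hadj
      rcases hb with rfl | rfl <;> simp_all
    · simp only [S2, Finset.mem_union, mem_liftF_inr, false_or, Finset.mem_insert,
        Finset.mem_singleton, inr.injEq] at ha
      rw [extG_adj_inr_inl] at hadj
      rcases ha with rfl | rfl <;> simp_all
    · simp only [S2, Finset.mem_union, mem_liftF_inr, false_or, Finset.mem_insert,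
        Finset.mem_singleton, inr.injEq] at ha hb
      rw [extG_adj_inr_inr] at hadj
      rcases ha with rfl | rfl <;> rcases hb with rfl | rfl <;> simp_all
  · rintro (w | i) hw
    · simp only [S2, Finset.mem_union, mem_liftF_inl, Finset.mem_insert,
        Finset.mem_singleton, reduceCtorEq, or_self, or_false] at hw
      obtain ⟨u, hu, hadj⟩ := ht.2 w hw
      exact ⟨inl u, by simp [S2, hu], by simpa using hadj⟩
    · fin_cases i
      · exact absurd (by simp [S2]) hw
      · exact ⟨inr 0, by simp [S2], by simp⟩
      · exact ⟨inr 3, by simp [S2], by simp⟩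
      · exact absurd (by simp [S2]) hw

lemma S0_maxIndep (hLR : IsBipartition G L R) (hiso : NoIsolated G) :
    IsMaxIndep (extG G L) (S0 R) := by
  obtain ⟨hd, hc, hbp⟩ := hLR
  have hRL : ∀ u ∈ R, u ∉ L := fun u hu => Finset.disjoint_right.mp hd hu
  rw [maxIndep_iff]
  constructor
  · rintro (a | i) ha (b | j) hb hadj
    · simp only [S0, Finset.mem_union, mem_liftF_inl, Finset.mem_insert,
        Finset.mem_singleton, reduceCtorEq, or_self, or_false] at ha hb
      rw [extG_adj_inl_inl] at hadj
      rcases hbp a b hadj with ⟨h1, -⟩ | ⟨-, h2⟩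
      · exact hRL a ha h1
      · exact hRL b hb h2
    · simp only [S0, Finset.mem_union, mem_liftF_inl, Finset.mem_insert,
        Finset.mem_singleton, reduceCtorEq, or_self, or_false] at ha
      rw [extG_adj_inl_inr] at hadj
      exact hRL a ha hadj.1
    · simp only [S0, Finset.mem_union, mem_liftF_inl, Finset.mem_insert,
        Finset.mem_singleton, reduceCtorEq, or_self, or_false] at hb
      rw [extG_adj_inr_inl] at hadj
      exact hRL b hb hadj.1
    · simp only [S0, Finset.mem_union, mem_liftF_inr, false_or, Finset.mem_insert,
        Finset.mem_singleton, inr.injEq] at ha hb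
      rw [extG_adj_inr_inr] at hadj
      rcases ha with rfl | rfl <;> rcases hb with rfl | rfl <;> simp_all
  · rintro (w | i) hw
    · simp only [S0, Finset.mem_union, mem_liftF_inl, Finset.mem_insert,
        Finset.mem_singleton, reduceCtorEq, or_self, or_false] at hw
      have hwL : w ∈ L := (hc w).resolve_right hw
      exact ⟨inr 1, by simp [S0], by simp [hwL]⟩
    · fin_cases i
      · exact ⟨inr 1, by simp [S0], by simp⟩
      · exact absurd (by simp [S0]) hw
      · exact ⟨inr 1, by simp [S0], by simp⟩
      · exact absurd (by simp [S0]) hw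

lemma classify (hLR : IsBipartition G L R) (hiso : NoIsolated G)
    (s : Finset (V ⊕ Fin 4)) (hs : IsMaxIndep (extG G L) s) :
    (∃ t, IsMaxIndep G t ∧ s = S1 t) ∨ (∃ t, IsMaxIndep G t ∧ s = S2 t) ∨ s = S0 R := by
  obtain ⟨hd, hc, hbp⟩ := hLR
  rw [maxIndep_iff] at hs
  obtain ⟨hi, hdom⟩ := hs
  set t : Finset V := Finset.univ.filter (fun v => inl v ∈ s) with ht
  have hmem : ∀ v : V, v ∈ t ↔ inl v ∈ s := by
    intro v; simp [ht]
  have htind : IsIndep G t := by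
    intro a ha b hb hadj
    exact hi _ ((hmem a).mp ha) _ ((hmem b).mp hb) ((extG_adj_inl_inl G L a b).mpr hadj)
  by_cases h1 : inr 1 ∈ s
  · -- s = S0 R
    right; right
    have h0 : inr 0 ∉ s := fun h0 => hi _ h0 _ h1 (by simp)
    have h2 : inr 2 ∉ s := fun h2 => hi _ h1 _ h2 (by simp)
    have h3 : inr 3 ∈ s := by
      by_contra h3
      obtain ⟨u, hu, hadj⟩ := hdom _ h3
      rcases u with w | i
      · rw [extG_adj_inl_inr] at hadj
        exact absurd hadj.2 (by decide)
      · rw [extG_adj_inr_inr] at hadj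
        fin_cases i <;> simp_all
    have htR : t = R := by
      apply Finset.Subset.antisymm
      · intro u hu
        rcases hc u with h | h
        · exact absurd ((extG_adj_inl_inr G L u 1).mpr ⟨h, rfl⟩)
            (hi _ ((hmem u).mp hu) _ h1)
        · exact h
      · intro r hr
        rw [hmem]
        by_contra hrs
        obtain ⟨u, hu, hadj⟩ := hdom _ hrs
        rcases u with w | i
        · rw [extG_adj_inl_inl] at hadj
          have hwnL : w ∉ L := fun hwL =>
            hi _ hu _ h1 ((extG_adj_inl_inr G L w 1).mpr ⟨hwL, rfl⟩)
          rcases hbp w r hadj with ⟨hwL, -⟩ | ⟨-, hrL⟩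
          · exact hwnL hwL
          · exact Finset.disjoint_left.mp hd hrL hr
        · rw [extG_adj_inr_inl] at hadj
          obtain ⟨hrL, hi1⟩ := hadj
          exact Finset.disjoint_left.mp hd hrL hr
    ext a
    rcases a with w | i
    · simp only [S0, Finset.mem_union, mem_liftF_inl, Finset.mem_insert,
        Finset.mem_singleton, reduceCtorEq, or_self, or_false]
      rw [← htR, hmem]
    · simp only [S0, Finset.mem_union, mem_liftF_inr, false_or, Finset.mem_insert,
        Finset.mem_singleton, inr.injEq]
      fin_cases i <;> simp_all
  · -- inr 1 ∉ s : s = S1 t or S2 t, with t maximal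
    have h0 : inr 0 ∈ s := by
      by_contra h0
      obtain ⟨u, hu, hadj⟩ := hdom _ h0
      rcases u with w | i
      · rw [extG_adj_inl_inr] at hadj
        exact absurd hadj.2 (by decide)
      · rw [extG_adj_inr_inr] at hadj
        fin_cases i <;> simp_all
    have htmax : IsMaxIndep G t := by
      rw [maxIndep_iff]
      refine ⟨htind, fun w hw => ?_⟩
      rw [hmem] at hw
      obtain ⟨u, hu, hadj⟩ := hdom _ hw
      rcases u with x | i
      · rw [extG_adj_inl_inl] at hadj
        exact ⟨x, (hmem x).mpr hu, hadj⟩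
      · rw [extG_adj_inr_inl] at hadj
        rw [hadj.2] at hu
        exact absurd hu h1
    have h23 : ¬(inr 2 ∈ s ∧ inr 3 ∈ s) := by
      rintro ⟨h2, h3⟩
      exact hi _ h2 _ h3 (by simp)
    by_cases h2 : inr 2 ∈ s
    · left
      refine ⟨t, htmax, ?_⟩
      ext a
      rcases a with w | i
      · simp only [S1, Finset.mem_union, mem_liftF_inl, Finset.mem_insert,
          Finset.mem_singleton, reduceCtorEq, or_self, or_false]
        rw [hmem]
      · have h3 : inr 3 ∉ s := fun h3 => h23 ⟨h2, h3⟩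
        simp only [S1, Finset.mem_union, mem_liftF_inr, false_or, Finset.mem_insert,
          Finset.mem_singleton, inr.injEq]
        fin_cases i <;> simp_all
    · right; left
      have h3 : inr 3 ∈ s := by
        by_contra h3
        obtain ⟨u, hu, hadj⟩ := hdom _ h3
        rcases u with w | i
        · rw [extG_adj_inl_inr] at hadj
          exact absurd hadj.2 (by decide)
        · rw [extG_adj_inr_inr] at hadj
          fin_cases i <;> simp_all
      refine ⟨t, htmax, ?_⟩
      ext a
      rcases a with w | i
      · simp only [S2, Finset.mem_union, mem_liftF_inl, Finset.mem_insert,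
          Finset.mem_singleton, reduceCtorEq, or_self, or_false]
        rw [hmem]
      · simp only [S2, Finset.mem_union, mem_liftF_inr, false_or, Finset.mem_insert,
          Finset.mem_singleton, inr.injEq]
        fin_cases i <;> simp_all

lemma extG_bipartite (hLR : IsBipartition G L R) : IsBipartite (extG G L) := by
  obtain ⟨hd, hc, hbp⟩ := hLR
  refine ⟨liftF L ∪ {inr 0, inr 2}, liftF R ∪ {inr 1, inr 3}, ?_, ?_, ?_⟩
  · rw [Finset.disjoint_left]
    rintro (u | i) ha hb
    · simp only [Finset.mem_union, mem_liftF_inl, Finset.mem_insert, Finset.mem_singleton,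
        reduceCtorEq, or_self, or_false] at ha hb
      exact Finset.disjoint_left.mp hd ha hb
    · simp only [Finset.mem_union, mem_liftF_inr, false_or, Finset.mem_insert,
        Finset.mem_singleton, inr.injEq] at ha hb
      rcases ha with rfl | rfl <;> rcases hb with h | h <;> exact absurd h (by decide)
  · rintro (u | i)
    · rcases hc u with h | h
      · exact Or.inl (by simp [h])
      · exact Or.inr (by simp [h])
    · fin_cases i
      · exact Or.inl (by simp)
      · exact Or.inr (by simp)
      · exact Or.inl (by simp)
      · exact Or.inr (by simp)
  · rintro (u | i) (v | j) hadj
    · rw [extG_adj_inl_inl] at hadj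
      rcases hbp u v hadj with ⟨h1, h2⟩ | ⟨h1, h2⟩
      · exact Or.inl ⟨by simp [h1], by simp [h2]⟩
      · exact Or.inr ⟨by simp [h1], by simp [h2]⟩
    · rw [extG_adj_inl_inr] at hadj
      obtain ⟨huL, rfl⟩ := hadj
      exact Or.inl ⟨by simp [huL], by simp⟩
    · rw [extG_adj_inr_inl] at hadj
      obtain ⟨hvL, rfl⟩ := hadj
      exact Or.inr ⟨by simp, by simp [hvL]⟩
    · rw [extG_adj_inr_inr] at hadj
      rcases hadj with ⟨rfl, rfl⟩ | ⟨rfl, rfl⟩ | ⟨rfl, rfl⟩ | ⟨rfl, rfl⟩ | ⟨rfl, rfl⟩ | ⟨rfl, rfl⟩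
      · exact Or.inl ⟨by simp, by simp⟩
      · exact Or.inr ⟨by simp, by simp⟩
      · exact Or.inl ⟨by simp, by simp⟩
      · exact Or.inr ⟨by simp, by simp⟩
      · exact Or.inl ⟨by simp, by simp⟩
      · exact Or.inr ⟨by simp, by simp⟩

lemma extG_noIsolated (hiso : NoIsolated G) : NoIsolated (extG G L) := by
  rintro (u | i)
  · obtain ⟨w, hw⟩ := hiso u
    exact ⟨inl w, by simpa using hw⟩
  · fin_cases i
    · exact ⟨inr 1, by simp⟩
    · exact ⟨inr 0, by simp⟩
    · exact ⟨inr 3, by simp⟩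
    · exact ⟨inr 2, by simp⟩

lemma count_ext (hLR : IsBipartition G L R) (hiso : NoIsolated G) :
    iotaM (extG G L) = 2 * iotaM G + 1 := by
  classical
  set T : Set (Finset V) := {t | IsMaxIndep G t} with hT
  have hM : {s : Finset (V ⊕ Fin 4) | IsMaxIndep (extG G L) s}
      = (S1 '' T ∪ S2 '' T) ∪ {S0 R} := by
    ext s
    constructor
    · intro hs
      rcases classify G L R hLR hiso s hs with ⟨t, ht, rfl⟩ | ⟨t, ht, rfl⟩ | rfl
      · exact Or.inl (Or.inl ⟨t, ht, rfl⟩)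
      · exact Or.inl (Or.inr ⟨t, ht, rfl⟩)
      · exact Or.inr rfl
    · rintro ((⟨t, ht, rfl⟩ | ⟨t, ht, rfl⟩) | rfl)
      · exact S1_maxIndep G L R hLR t ht
      · exact S2_maxIndep G L R hLR t ht
      · exact S0_maxIndep G L R hLR hiso
  have hS1inj : Function.Injective (S1 (V := V)) := by
    intro t1 t2 h
    ext u
    have h1 : inl u ∈ S1 t1 ↔ inl u ∈ S1 t2 := by rw [h]
    simpa [S1] using h1
  have hS2inj : Function.Injective (S2 (V := V)) := by
    intro t1 t2 h
    ext u
    have h1 : inl u ∈ S2 t1 ↔ inl u ∈ S2 t2 := by rw [h]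
    simpa [S2] using h1
  have hd1 : Disjoint (S1 '' T) (S2 '' T) := by
    rw [Set.disjoint_left]
    rintro s ⟨t, -, rfl⟩ ⟨t', -, heq⟩
    have h2 : inr 2 ∈ S1 t := by simp [S1]
    rw [← heq] at h2
    simp [S2] at h2
  have hd2 : Disjoint (S1 '' T ∪ S2 '' T) {S0 R} := by
    rw [Set.disjoint_right]
    rintro s rfl
    rintro (⟨t, -, heq⟩ | ⟨t, -, heq⟩)
    · have h2 : inr 1 ∈ S0 R := by simp [S0]
      rw [← heq] at h2
      simp [S1] at h2
    · have h2 : inr 1 ∈ S0 R := by simp [S0]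
      rw [← heq] at h2
      simp [S2] at h2
  have e1 : iotaM (extG G L) = Set.ncard {s : Finset (V ⊕ Fin 4) | IsMaxIndep (extG G L) s} := by
    rw [iotaM, Set.ncard_eq_toFinset_card']
    rw [Nat.card_eq_fintype_card]
    exact (Set.toFinset_card _).symm
  have e2 : iotaM G = Set.ncard T := by
    rw [iotaM, hT, Set.ncard_eq_toFinset_card']
    rw [Nat.card_eq_fintype_card]
    exact (Set.toFinset_card _).symm
  rw [e1, e2, hM, Set.ncard_union_eq hd2, Set.ncard_union_eq hd1,
    Set.ncard_image_of_injective _ hS1inj, Set.ncard_image_of_injective _ hS2inj,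
    Set.ncard_singleton]
  ring

end Main

theorem stmt_11 {V : Type*} [Fintype V] (G : SimpleGraph V)
    (hbip : IsBipartite G) (hiso : NoIsolated G) :
    ∃ (W : Type) (_ : Fintype W) (G' : SimpleGraph W),
      IsBipartite G' ∧ NoIsolated G' ∧
      Fintype.card W = Fintype.card V + 4 ∧ iotaM G' = 2 * iotaM G + 1 := by
  classical
  obtain ⟨L, R, hLR⟩ := hbip
  let e : V ≃ Fin (Fintype.card V) := Fintype.equivFin V
  have hbip0 : IsBipartite (relabel e G) := relabel_bipartite e G ⟨L, R, hLR⟩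
  have hiso0 : NoIsolated (relabel e G) := relabel_noIsolated e G hiso
  obtain ⟨L0, R0, hLR0⟩ := hbip0
  refine ⟨Fin (Fintype.card V) ⊕ Fin 4, inferInstance, extG (relabel e G) L0,
    extG_bipartite (relabel e G) L0 R0 hLR0, extG_noIsolated (relabel e G) L0 hiso0, by simp, ?_⟩
  rw [count_ext (relabel e G) L0 R0 hLR0 hiso0, relabel_iotaM]
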